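/- Assume K is diagonal in the v_n-basis. Let y^δ ∈ Y, α > 0, and suppose the series x* = ∑_n H_{α,σ_n}(σ_n^{1/3} ⟨y^δ, u_n⟩) v_n converges in X. Then x* is a stationary point of the ℓ^{1/2} Tikhonov functional: for every n with ⟨x*, v_n⟩ ≠ 0, 2 σ_n (σ_n ⟨x*, v_n⟩ − ⟨y^δ, u_n⟩) + α · sign(⟨x*, v_n⟩) / (2 √(|⟨x*, v_n⟩|)) = 0, and ⟨x*, v_n⟩ = 0 for every n with |σ_n^{1/3} ⟨y^δ, u_n⟩| ≤ (3/4) α^{2/3}. -/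

import Mathlib

open scoped InnerProductSpace

/-- The half thresholding function `H_{α,σ}`. -/
noncomputable def halfThresh (α σ t : ℝ) : ℝ :=
  if |t| ≤ 3 / 4 * α ^ ((2 : ℝ) / 3) then 0
  else 2 / (3 * σ ^ ((4 : ℝ) / 3)) * t *
    (1 + Real.cos (2 / 3 * Real.pi -
      2 / 3 * Real.arccos (α / 8 * (|t| / 3) ^ (-(3 : ℝ) / 2))))

set_option maxHeartbeats 1000000 in
lemma halfThresh_stationary (α σ b : ℝ) (hα : 0 < α) (hσ : 0 < σ)
    (ht : ¬ |σ ^ ((1:ℝ)/3) * b| ≤ 3 / 4 * α ^ ((2:ℝ)/3)) :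
    2 * σ * (σ * halfThresh α σ (σ ^ ((1:ℝ)/3) * b) - b)
      + α * Real.sign (halfThresh α σ (σ ^ ((1:ℝ)/3) * b))
        / (2 * Real.sqrt |halfThresh α σ (σ ^ ((1:ℝ)/3) * b)|) = 0 := by
  push_neg at ht
  set t : ℝ := σ ^ ((1:ℝ)/3) * b with htdef
  set s : ℝ := |t| with hsdef
  have hαpow : (0:ℝ) < α ^ ((2:ℝ)/3) := Real.rpow_pos_of_pos hα _
  have hs0 : 0 < s := lt_trans (by positivity) ht
  have ht0 : t ≠ 0 := fun h => by simp [hsdef, h] at hs0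
  -- the cube-root-ish quantities
  set D : ℝ := σ ^ ((1:ℝ)/3) with hDdef
  have hD : 0 < D := Real.rpow_pos_of_pos hσ _
  have hD3 : D ^ 3 = σ := by
    rw [hDdef, ← Real.rpow_natCast (σ ^ ((1:ℝ)/3)) 3, ← Real.rpow_mul hσ.le]
    norm_num
  have hA : σ ^ ((4:ℝ)/3) = D ^ 4 := by
    rw [hDdef, ← Real.rpow_natCast (σ ^ ((1:ℝ)/3)) 4, ← Real.rpow_mul hσ.le]
    norm_num
  -- the quantity z and its bounds
  set z : ℝ := α / 8 * (s / 3) ^ (-(3:ℝ) / 2) with hzdef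
  have hz0 : 0 ≤ z := by positivity
  have hs3pos : (0:ℝ) < (s/3) ^ ((3:ℝ)/2) := Real.rpow_pos_of_pos (by linarith) _
  have hkey : α / 8 ≤ (s/3) ^ ((3:ℝ)/2) := by
    have h1 : (α/8) ^ ((2:ℝ)/3) = α ^ ((2:ℝ)/3) / 4 := by
      rw [Real.div_rpow hα.le (by norm_num)]
      congr 1
      rw [show (8:ℝ) = 2 ^ (3:ℕ) by norm_num, ← Real.rpow_natCast 2 3,
        ← Real.rpow_mul (by norm_num)]
      norm_num
    have h2 : (α/8) ^ ((2:ℝ)/3) ≤ s / 3 := by rw [h1]; linarith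
    calc α / 8 = ((α/8) ^ ((2:ℝ)/3)) ^ ((3:ℝ)/2) := by
          rw [← Real.rpow_mul (by positivity)]; norm_num
      _ ≤ (s/3) ^ ((3:ℝ)/2) := Real.rpow_le_rpow (by positivity) h2 (by norm_num)
  have hzinv : z = (α / 8) / (s/3) ^ ((3:ℝ)/2) := by
    rw [hzdef, show (-(3:ℝ)/2) = -((3:ℝ)/2) by norm_num,
      Real.rpow_neg (by linarith : (0:ℝ) ≤ s/3)]
    ring
  have hz1 : z ≤ 1 := by
    rw [hzinv]
    rw [div_le_one hs3pos]
    exact hkey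
  -- arccos facts
  set φ : ℝ := Real.arccos z with hφdef
  have hcosφ : Real.cos φ = z := Real.cos_arccos (by linarith) hz1
  have hφ0 : 0 ≤ φ := Real.arccos_nonneg z
  have hφπ : φ ≤ Real.pi := Real.arccos_le_pi z
  set ψ : ℝ := Real.pi / 3 - φ / 3 with hψdef
  have hπ := Real.pi_pos
  have hc0 : 0 < Real.cos ψ := by
    apply Real.cos_pos_of_mem_Ioo
    constructor
    · rw [hψdef]; linarith
    · rw [hψdef]; linarith
  set c0 : ℝ := Real.cos ψ with hc0def
  have hcos3 : 4 * c0 ^ 3 - 3 * c0 = -z := by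
    have h := Real.cos_three_mul ψ
    rw [show 3 * ψ = Real.pi - φ by rw [hψdef]; ring, Real.cos_pi_sub, hcosφ] at h
    linarith [h]
  -- r facts
  set r : ℝ := Real.sqrt (s / 3) with hrdef
  have hr : 0 < r := Real.sqrt_pos.mpr (by linarith)
  have hr2 : r ^ 2 = s / 3 := Real.sq_sqrt (by linarith)
  have hr3 : r ^ 3 = (s/3) ^ ((3:ℝ)/2) := by
    rw [hrdef, Real.sqrt_eq_rpow, ← Real.rpow_natCast ((s/3) ^ ((1:ℝ)/2)) 3,
      ← Real.rpow_mul (by linarith)]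
    norm_num
  have hzr : z * r ^ 3 = α / 8 := by
    rw [hzinv, hr3]
    field_simp
  -- the value of halfThresh
  have hc : halfThresh α σ t = 4 * t * c0 ^ 2 / (3 * D ^ 4) := by
    rw [halfThresh, if_neg (not_le.mpr ht), hA]
    rw [show 2 / 3 * Real.pi - 2 / 3 * Real.arccos (α / 8 * (|t| / 3) ^ (-(3:ℝ)/2))
        = 2 * ψ by rw [hψdef, hφdef, hzdef, hsdef]; ring]
    rw [Real.cos_two_mul, ← hc0def]
    ring
  set c : ℝ := halfThresh α σ t with hcdef
  have habs : |c| = 4 * s * c0 ^ 2 / (3 * D ^ 4) := by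
    rw [hc, abs_div, abs_of_pos (by positivity : (0:ℝ) < 3 * D ^ 4),
      abs_mul, abs_mul, abs_of_pos (by norm_num : (0:ℝ) < 4),
      abs_of_pos (by positivity : (0:ℝ) < c0 ^ 2), hsdef]
  have hsqrt : Real.sqrt |c| = 2 * c0 * r / D ^ 2 := by
    rw [show |c| = (2 * c0 * r / D ^ 2) ^ 2 by
      rw [habs, show s = 3 * r ^ 2 by linarith]; field_simp; ring]
    exact Real.sqrt_sq (by positivity)
  have hb : b = t / D := by rw [htdef]; field_simp
  clear_value c r c0 ψ φ z D s t
  rcases lt_or_gt_of_ne ht0 with htneg | htpos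
  · -- t < 0
    have hcneg : c < 0 := by
      rw [hc]
      apply div_neg_of_neg_of_pos _ (by positivity)
      have h2 : 0 < c0 ^ 2 := by positivity
      nlinarith [mul_pos h2 (neg_pos.mpr htneg)]
    have hsign : Real.sign c = -1 := Real.sign_of_neg hcneg
    have hst : s = -t := by rw [hsdef]; exact abs_of_neg htneg
    rw [hsign, hsqrt, hc, hb, ← hD3]
    have hst' : t = -(3 * r ^ 2) := by linarith [hr2]
    rw [hst']
    field_simp
    linear_combination (-8*D^2*r^3) * hcos3 + 8*D^2 * hzr
  · -- t > 0
    have hcpos : 0 < c := by rw [hc]; positivity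
    have hsign : Real.sign c = 1 := Real.sign_of_pos hcpos
    have hst : s = t := by rw [hsdef]; exact abs_of_pos htpos
    rw [hsign, hsqrt, hc, hb, ← hD3]
    have hst' : t = 3 * r ^ 2 := by linarith [hr2]
    rw [hst']
    field_simp
    linear_combination (8*D^2*r^3) * hcos3 - 8*D^2 * hzr

lemma coeff_eq {X : Type*} [NormedAddCommGroup X] [InnerProductSpace ℝ X]
    (v : ℕ → X) (hv : Orthonormal ℝ v) (c : ℕ → ℝ) (x : X)
    (hx : HasSum (fun n => c n • v n) x) (n : ℕ) :
    ⟪x, v n⟫_ℝ = c n := by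
  have h1 : HasSum (fun m => ⟪v n, c m • v m⟫_ℝ) ⟪v n, x⟫_ℝ :=
    hx.mapL (innerSL ℝ (v n))
  have h2 : (fun m => ⟪v n, c m • v m⟫_ℝ) = fun m => if m = n then c n else 0 := by
    funext m
    rw [real_inner_smul_right, orthonormal_iff_ite.mp hv n m]
    by_cases h : m = n
    · simp [h]
    · simp [h, Ne.symm h]
  rw [h2] at h1
  rw [real_inner_comm, h1.unique (hasSum_ite_eq n (c n))]

/-- If the compact operator `K` is diagonal in the `v n`-basis, `α > 0`, and the series
`x* = ∑ H_{α,σ_n}(σ_n^{1/3} ⟨y^δ, u_n⟩) v_n` converges in `X`, then `x*` is a stationary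
point of the `ℓ^{1/2}` Tikhonov functional: the first-order condition holds at every
nonzero coefficient, and `⟨x*, v_n⟩ = 0` whenever `|σ_n^{1/3} ⟨y^δ, u_n⟩| ≤ (3/4) α^{2/3}`. -/
theorem halfSVD_stationary {X Y : Type*}
    [NormedAddCommGroup X] [InnerProductSpace ℝ X] [CompleteSpace X]
    [NormedAddCommGroup Y] [InnerProductSpace ℝ Y] [CompleteSpace Y]
    (K : X →L[ℝ] Y) (hK : IsCompactOperator K)
    (σ : ℕ → ℝ) (v : ℕ → X) (u : ℕ → Y)
    (hσ : ∀ n, 0 < σ n) (hv : Orthonormal ℝ v) (hu : Orthonormal ℝ u)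
    (hKv : ∀ n, K (v n) = σ n • u n)
    (hKadj : ∀ n, (ContinuousLinearMap.adjoint K) (u n) = σ n • v n)
    (hcomplete : (Submodule.span ℝ (Set.range v)).topologicalClosure = ⊤)
    (yδ : Y) (α : ℝ) (hα : 0 < α)
    (xstar : X)
    (hxstar : HasSum
      (fun n => halfThresh α (σ n) (σ n ^ ((1 : ℝ) / 3) * ⟪yδ, u n⟫_ℝ) • v n) xstar) :
    (∀ n : ℕ, ⟪xstar, v n⟫_ℝ ≠ 0 →
      2 * σ n * (σ n * ⟪xstar, v n⟫_ℝ - ⟪yδ, u n⟫_ℝ)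
        + α * Real.sign (⟪xstar, v n⟫_ℝ) / (2 * Real.sqrt (|⟪xstar, v n⟫_ℝ|)) = 0) ∧
    (∀ n : ℕ, |σ n ^ ((1 : ℝ) / 3) * ⟪yδ, u n⟫_ℝ| ≤ 3 / 4 * α ^ ((2 : ℝ) / 3) →
      ⟪xstar, v n⟫_ℝ = 0) := by
  constructor
  · intro n hne
    have hco := coeff_eq v hv _ xstar hxstar n
    have hthr : ¬ |σ n ^ ((1:ℝ)/3) * ⟪yδ, u n⟫_ℝ| ≤ 3 / 4 * α ^ ((2:ℝ)/3) := by
      intro h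
      exact hne (by rw [hco, halfThresh, if_pos h])
    rw [hco]
    exact halfThresh_stationary α (σ n) ⟪yδ, u n⟫_ℝ hα (hσ n) hthr
  · intro n h
    rw [coeff_eq v hv _ xstar hxstar n, halfThresh, if_pos h]
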